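/- arXiv:2210.12419 — 4 statements merged into one kernel-verified Lean document; each statement's English description precedes it below -/
import Mathlib

section
/- Let C be a Grothendieck category, L a stable localizing subcategory, and Y an injective object of C. Then Y is isomorphic to t_L(Y) ⊕ S(T(Y)), where t_L(Y) is the largest subobject of Y lying in L; in particular t_L(Y) is injective. -/
open CategoryTheory Limits

universe w v u u₂ u₃ u₄ u₅

namespace CentralSheaf

variable {C : Type u} [Category.{v} C] [Abelian C]

/-- A monomorphism is essential if every morphism whose precomposition with it
is a monomorphism is itself a monomorphism. -/
def IsEssentialMono {X Y : C} (f : X ⟶ Y) : Prop :=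
  Mono f ∧ ∀ ⦃Z : C⦄ (g : Y ⟶ Z), Mono (f ≫ g) → Mono g

/-- A Serre subcategory of an abelian category, given as a predicate on objects:
it contains the zero objects and is closed under isomorphisms, subobjects,
quotient objects and extensions. -/
structure IsSerre (P : C → Prop) : Prop where
  zero : ∀ X : C, IsZero X → P X
  iso : ∀ {X Y : C}, (X ≅ Y) → P X → P Y
  sub : ∀ {X Y : C} (f : X ⟶ Y), Mono f → P Y → P X
  quot : ∀ {X Y : C} (f : X ⟶ Y), Epi f → P X → P Y
  ext : ∀ S : ShortComplex C, S.ShortExact → P S.X₁ → P S.X₃ → P S.X₂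

/-- A localizing subcategory: a Serre subcategory closed under arbitrary direct sums. -/
structure IsLocalizing (P : C → Prop) extends IsSerre P : Prop where
  sums : ∀ {ι : Type v} (X : ι → C) (c : Cofan X), IsColimit c → (∀ i, P (X i)) → P c.pt

/-- Stability: closure under essential extensions. -/
def IsStable (P : C → Prop) : Prop :=
  ∀ {X Y : C} (f : X ⟶ Y), IsEssentialMono f → P X → P Y

/-- A stable localizing subcategory. -/
structure IsStableLocalizing (P : C → Prop) extends IsLocalizing P : Prop where
  stable : IsStable P

/-- Data exhibiting `D` as the Gabriel quotient `C/P` of `C` by the localizing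
subcategory `P`: an exact quotient functor `T` with fully faithful right adjoint
(section functor) `S`, whose kernel is exactly `P`. -/
structure QuotientData (P : C → Prop) (D : Type u₂) [Category.{v} D] [Abelian D] where
  T : C ⥤ D
  S : D ⥤ C
  adj : T ⊣ S
  additive : T.Additive
  preservesFiniteLimits : PreservesFiniteLimits T
  fullS : S.Full
  faithfulS : S.Faithful
  ker : ∀ X : C, P X ↔ IsZero (T.obj X)

/-- `t` is the `P`-torsion subobject of its ambient object: it lies in `P` and
contains every subobject lying in `P`. -/
def IsTorsionSubobject (P : C → Prop) {X : C} (t : Subobject X) : Prop :=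
  P ((t : C)) ∧ ∀ s : Subobject X, P ((s : C)) → s ≤ t

/-- `P₃` is the smallest localizing subcategory containing `P₁` and `P₂`. -/
def IsJoin (P₁ P₂ P₃ : C → Prop) : Prop :=
  IsLocalizing P₃ ∧ (∀ X, P₁ X → P₃ X) ∧ (∀ X, P₂ X → P₃ X) ∧
    ∀ Q : C → Prop, IsLocalizing Q → (∀ X, P₁ X → Q X) → (∀ X, P₂ X → Q X) →
      ∀ X, P₃ X → Q X

/-- An object is noetherian if its subobjects satisfy the ascending chain condition. -/
def IsNoetherianObject (X : C) : Prop := WellFoundedGT (Subobject X)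

/-- A Grothendieck category is locally noetherian if it has a (separating) set of
noetherian generators. -/
def IsLocallyNoetherian (C : Type u) [Category.{v} C] [Abelian C] : Prop :=
  ∃ 𝒢 : Set C, ObjectProperty.IsSeparating 𝒢 ∧ ∀ G ∈ 𝒢, IsNoetherianObject G


section Auxiliary

variable {C : Type u} [Category.{v} C] [Abelian C]

lemma eq_bot_of_arrow_eq_zero {Y : C} {v : Subobject Y} (h : v.arrow = 0) : v = ⊥ := by
  have := (Subobject.mk_eq_bot_iff_zero (f := v.arrow)).2 h
  rwa [Subobject.mk_arrow] at this

lemma inf_eq_bot_of_isZero_pullback {Y A B : C} (f : A ⟶ Y) (g : B ⟶ Y) [Mono f] [Mono g]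
    (hz : IsZero (pullback f g)) : Subobject.mk f ⊓ Subobject.mk g = ⊥ := by
  set v := Subobject.mk f ⊓ Subobject.mk g with hv
  have h1 : v ≤ Subobject.mk f := inf_le_left
  have h2 : v ≤ Subobject.mk g := inf_le_right
  have w1 : Subobject.ofLEMk v f h1 ≫ f = v.arrow := Subobject.ofLEMk_comp h1
  have w2 : Subobject.ofLEMk v g h2 ≫ g = v.arrow := Subobject.ofLEMk_comp h2
  have hl : pullback.lift _ _ (w1.trans w2.symm) ≫ pullback.fst f g = Subobject.ofLEMk v f h1 :=
    pullback.lift_fst _ _ _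
  have hz0 : pullback.lift _ _ (w1.trans w2.symm) = (0 : (v : C) ⟶ pullback f g) :=
    hz.eq_of_tgt _ _
  apply eq_bot_of_arrow_eq_zero
  rw [← w1, ← hl, hz0, zero_comp, zero_comp]

lemma isZero_pullback_of_inf_eq_bot {Y : C} {a b : Subobject Y} (h : a ⊓ b = ⊥) :
    IsZero (pullback a.arrow b.arrow) := by
  have h1 : Subobject.mk (pullback.fst a.arrow b.arrow ≫ a.arrow) ≤ a := by
    have := Subobject.mk_le_mk_of_comm (f₁ := pullback.fst a.arrow b.arrow ≫ a.arrow)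
      (f₂ := a.arrow) (pullback.fst a.arrow b.arrow) rfl
    rwa [Subobject.mk_arrow] at this
  have h2 : Subobject.mk (pullback.fst a.arrow b.arrow ≫ a.arrow) ≤ b := by
    have := Subobject.mk_le_mk_of_comm (f₁ := pullback.fst a.arrow b.arrow ≫ a.arrow)
      (f₂ := b.arrow) (pullback.snd a.arrow b.arrow) pullback.condition.symm
    rwa [Subobject.mk_arrow] at this
  have hb : Subobject.mk (pullback.fst a.arrow b.arrow ≫ a.arrow) = ⊥ :=
    le_bot_iff.1 (h ▸ le_inf h1 h2)
  have h0 : pullback.fst a.arrow b.arrow ≫ a.arrow = 0 :=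
    (Subobject.mk_eq_bot_iff_zero).1 hb
  exact IsZero.of_mono_eq_zero _ h0

/-- The colimit of a constant functor over a connected category. -/
noncomputable def constColimIso (J : Type u₃) [Category.{u₄} J] [IsConnected J]
    {C : Type u} [Category.{v} C] (X : C) [HasColimitsOfShape J C] :
    colimit ((Functor.const J).obj X) ≅ X :=
  colimit.isoColimitCocone ⟨⟨X, ⟨fun _ => 𝟙 X, by simp⟩⟩,
    { desc := fun s => s.ι.app (Classical.arbitrary J)
      fac := fun s j => by
        have key := constant_of_preserves_morphisms (α := (X ⟶ s.pt))
          (fun k => s.ι.app k)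
          (fun k k' f => by simpa using (s.ι.naturality f).symm)
        simpa using (key j (Classical.arbitrary J)).symm
      uniq := fun s m hm => by simpa using hm (Classical.arbitrary J) }⟩

lemma ι_constColimIso (J : Type u₃) [Category.{u₄} J] [IsConnected J]
    {C : Type u} [Category.{v} C] (X : C) [HasColimitsOfShape J C] (j : J) :
    colimit.ι ((Functor.const J).obj X) j ≫ (constColimIso J X).hom = 𝟙 X :=
  colimit.isoColimitCocone_ι_hom _ _

lemma exists_chain_bound {Y : C} [HasColimits C] [AB5 C] [WellPowered.{v} C]
    (u : Subobject Y) (c : Set (Subobject Y)) (hchain : IsChain (· ≤ ·) c) (hne : c.Nonempty)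
    (hbot : ∀ e ∈ c, e ⊓ u = ⊥) :
    ∃ B : Subobject Y, (∀ e ∈ c, e ≤ B) ∧ B ⊓ u = ⊥ := by
  haveI : Nonempty c := hne.to_subtype
  haveI : IsDirected c (· ≤ ·) := ⟨fun x y => by
    rcases hchain.total x.2 y.2 with h | h
    · exact ⟨y, h, le_rfl⟩
    · exact ⟨x, le_rfl, h⟩⟩
  haveI : Small.{v} c := small_of_injective (Subtype.val_injective)
  haveI : LocallySmall.{v} c := inferInstance
  haveI : EssentiallySmall.{v} c := essentiallySmall_of_small_of_locallySmall _
  haveI : IsFiltered (SmallModel c) := IsFiltered.of_equivalence (equivSmallModel c)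
  haveI : IsConnected (SmallModel c) := IsFiltered.isConnected _
  set E := equivSmallModel c with hE
  let F0 : c ⥤ C :=
    { obj := fun x => ((x : Subobject Y) : C)
      map := fun {x y} f => Subobject.ofLE _ _ (leOfHom f)
      map_id := fun x => Subobject.ofLE_refl _
      map_comp := fun f g => (Subobject.ofLE_comp_ofLE _ _ _ _ _).symm }
  set F : SmallModel c ⥤ C := E.inverse ⋙ F0 with hF
  let W : SmallModel c → Subobject Y := fun j => ((E.inverse.obj j) : Subobject Y)
  let α : F ⟶ (Functor.const (SmallModel c)).obj Y :=
    { app := fun j => (W j).arrow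
      naturality := fun j j' f => by
        dsimp [F, F0, W]
        rw [Subobject.ofLE_arrow, Category.comp_id] }
  haveI : Mono α := NatTrans.mono_of_mono_app α
  set β : (Functor.const (SmallModel c)).obj ((u : C)) ⟶ (Functor.const (SmallModel c)).obj Y :=
    (Functor.const _).map u.arrow with hβdef
  set εY := constColimIso (SmallModel c) Y with hεY
  set εU := constColimIso (SmallModel c) ((u : C)) with hεU
  set m : colimit F ⟶ Y := colim.map α ≫ εY.hom with hm
  haveI : Mono (colim.map α) := colim.map_mono α
  haveI hmono : Mono m := mono_comp _ _
  have hι : ∀ j, colimit.ι F j ≫ m = (W j).arrow := by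
    intro j
    rw [hm, ← Category.assoc, colimit.ι_map, Category.assoc, ι_constColimIso]
    exact Category.comp_id _
  refine ⟨Subobject.mk m, ?_, ?_⟩
  · intro e he
    have h1 : e ≤ W (E.functor.obj ⟨e, he⟩) := leOfHom (E.unit.app ⟨e, he⟩)
    exact le_trans h1 (Subobject.le_mk_of_comm (colimit.ι F (E.functor.obj ⟨e, he⟩))
      (hι _))
  · have key : IsZero (pullback m u.arrow) := by
      have hPBj : ∀ j, IsZero ((pullback α β).obj j) := fun j => by
        have hz : IsZero (pullback ((W j).arrow) (u.arrow)) :=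
          isZero_pullback_of_inf_eq_bot (hbot _ (E.inverse.obj j).2)
        exact IsZero.of_iso hz ((limitObjIsoLimitCompEvaluation _ j) ≪≫
          HasLimit.isoOfNatIso (cospanCompIso _ α β))
      have hcolim : IsZero (colim.obj (pullback α β)) := by
        rw [IsZero.iff_id_eq_zero]
        apply colimit.hom_ext
        intro j
        exact (hPBj j).eq_of_src _ _
      have hβc : colim.map β ≫ εY.hom = εU.hom ≫ u.arrow := by
        apply colimit.hom_ext
        intro j
        rw [← Category.assoc, colimit.ι_map, Category.assoc, ι_constColimIso,
          ← Category.assoc, ι_constColimIso]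
        exact (Category.comp_id _).trans (Category.id_comp _).symm
      have h1 : colim.map α = m ≫ εY.inv := by rw [hm, Category.assoc, Iso.hom_inv_id,
        Category.comp_id]
      have h2 : εU.inv ≫ colim.map β = u.arrow ≫ εY.inv := by
        rw [Iso.inv_comp_eq, ← Category.assoc, ← hβc, Category.assoc, Iso.hom_inv_id,
          Category.comp_id]
      have hcond : pullback.fst m u.arrow ≫ colim.map α
          = (pullback.snd m u.arrow ≫ εU.inv) ≫ colim.map β := by
        calc pullback.fst m u.arrow ≫ colim.map α
            = pullback.fst m u.arrow ≫ (m ≫ εY.inv) := by rw [← h1]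
          _ = (pullback.fst m u.arrow ≫ m) ≫ εY.inv := (Category.assoc _ _ _).symm
          _ = (pullback.snd m u.arrow ≫ u.arrow) ≫ εY.inv := by rw [pullback.condition]
          _ = pullback.snd m u.arrow ≫ (u.arrow ≫ εY.inv) := Category.assoc _ _ _
          _ = pullback.snd m u.arrow ≫ (εU.inv ≫ colim.map β) := by rw [h2]
          _ = (pullback.snd m u.arrow ≫ εU.inv) ≫ colim.map β := (Category.assoc _ _ _).symm
      let k : pullback m u.arrow ⟶ pullback (colim.map α) (colim.map β) :=
        pullback.lift (pullback.fst m u.arrow) (pullback.snd m u.arrow ≫ εU.inv) hcond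
      haveI : Mono k := by
        haveI : Mono (k ≫ pullback.fst (colim.map α) (colim.map β)) := by
          have hk : k ≫ pullback.fst (colim.map α) (colim.map β) = pullback.fst m u.arrow :=
            pullback.lift_fst _ _ _
          rw [hk]; infer_instance
        exact mono_of_mono k (pullback.fst _ _)
      exact IsZero.of_mono (k ≫ (PreservesPullback.iso colim α β).inv) hcolim
    have := inf_eq_bot_of_isZero_pullback m u.arrow key
    rwa [Subobject.mk_arrow] at this

lemma hom_eq_zero_of_isZero_T {D : Type u₂} [Category.{v} D] [Abelian D]
    {P : C → Prop} (Q : QuotientData P D) {W : C} {Z : D}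
    (hW : IsZero (Q.T.obj W)) (f : W ⟶ Q.S.obj Z) : f = 0 :=
  (Q.adj.homEquiv W Z).symm.injective (hW.eq_of_src _ _)

end Auxiliary

/-- If `L` is a stable localizing subcategory of a Grothendieck
category `C` and `Y` is injective, then `Y ≅ t_L(Y) ⊞ S(T(Y))`, and in
particular the torsion subobject `t_L(Y)` is injective. -/
theorem injective_decomposition_of_stable
    [HasColimits C] [AB5 C] (hsep : ∃ G : C, IsSeparator G)
    {D : Type u₂} [Category.{v} D] [Abelian D]
    (P : C → Prop) (hP : IsStableLocalizing P) (Q : QuotientData P D)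
    (Y : C) (hY : Injective Y) (t : Subobject Y) (ht : IsTorsionSubobject P t) :
    Nonempty (Y ≅ (t : C) ⊞ Q.S.obj (Q.T.obj Y)) ∧ Injective ((t : C)) := by
  obtain ⟨G, hG⟩ := hsep
  haveI : WellPowered.{v} C := wellPowered_of_isSeparator G hG
  haveI := Q.additive
  haveI := Q.preservesFiniteLimits
  haveI := Q.fullS
  haveI := Q.faithfulS
  haveI := hY
  -- Zorn: a maximal subobject disjoint from `t`
  obtain ⟨Cm, hCm, hmax⟩ : ∃ Cm : Subobject Y, Cm ⊓ t = ⊥ ∧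
      ∀ s : Subobject Y, s ⊓ t = ⊥ → Cm ≤ s → s = Cm := by
    obtain ⟨Cm, hmem, hmax⟩ := zorn_le₀ {a : Subobject Y | a ⊓ t = ⊥} (fun c hcs hc => by
      rcases c.eq_empty_or_nonempty with rfl | hne
      · exact ⟨⊥, le_antisymm inf_le_left bot_le, fun z hz => hz.elim⟩
      · obtain ⟨B, hB1, hB2⟩ := exists_chain_bound t c hc hne (fun e he => hcs he)
        exact ⟨B, hB2, hB1⟩)
    exact ⟨Cm, hmem, fun s hs hle => le_antisymm (hmax hs hle) hle⟩
  set q : Y ⟶ cokernel Cm.arrow := cokernel.π Cm.arrow with hq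
  haveI hqepi : Epi q := by rw [hq]; infer_instance
  set φ : (t : C) ⟶ cokernel Cm.arrow := t.arrow ≫ q with hφ
  -- φ is a monomorphism
  have hφmono : Mono φ := by
    apply Abelian.mono_of_kernel_ι_eq_zero
    have hg0 : (kernel.ι φ ≫ t.arrow) ≫ q = 0 := by
      rw [Category.assoc, ← hφ]
      exact kernel.condition φ
    have hg0' : (kernel.ι φ ≫ t.arrow) ≫ cokernel.π Cm.arrow = 0 := by rw [← hq]; exact hg0
    have hcomp : Abelian.monoLift Cm.arrow _ hg0' ≫ Cm.arrow = kernel.ι φ ≫ t.arrow :=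
      Abelian.monoLift_comp _ _ _
    have h1 : Subobject.mk (kernel.ι φ ≫ t.arrow) ≤ t := by
      have := Subobject.mk_le_mk_of_comm (f₁ := kernel.ι φ ≫ t.arrow) (f₂ := t.arrow)
        (kernel.ι φ) rfl
      rwa [Subobject.mk_arrow] at this
    have h2 : Subobject.mk (kernel.ι φ ≫ t.arrow) ≤ Cm := by
      have := Subobject.mk_le_mk_of_comm (f₁ := kernel.ι φ ≫ t.arrow) (f₂ := Cm.arrow)
        (Abelian.monoLift Cm.arrow _ hg0') hcomp
      rwa [Subobject.mk_arrow] at this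
    have hb : Subobject.mk (kernel.ι φ ≫ t.arrow) = ⊥ := le_bot_iff.1 (hCm ▸ le_inf h2 h1)
    have h0 : kernel.ι φ ≫ t.arrow = 0 := Subobject.mk_eq_bot_iff_zero.1 hb
    exact zero_of_comp_mono t.arrow h0
  -- φ is an essential monomorphism, by maximality of Cm
  have hess : IsEssentialMono φ := by
    refine ⟨hφmono, ?_⟩
    intro Z g hg
    haveI := hg
    have hCle : Cm ≤ kernelSubobject (q ≫ g) := by
      apply le_kernelSubobject
      rw [← Category.assoc, hq, cokernel.condition, zero_comp]
    have hdisj : kernelSubobject (q ≫ g) ⊓ t = ⊥ := by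
      set v := kernelSubobject (q ≫ g) ⊓ t with hv
      have hv1 : v ≤ kernelSubobject (q ≫ g) := inf_le_left
      have hv2 : v ≤ t := inf_le_right
      have hva : v.arrow ≫ q ≫ g = 0 := by
        rw [← Subobject.ofLE_arrow hv1, Category.assoc, kernelSubobject_arrow_comp, comp_zero]
      have h0 : Subobject.ofLE v t hv2 ≫ (φ ≫ g) = 0 := by
        have heq : Subobject.ofLE v t hv2 ≫ (φ ≫ g) = v.arrow ≫ q ≫ g := by
          rw [hφ]
          calc Subobject.ofLE v t hv2 ≫ (t.arrow ≫ q) ≫ g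
              = (Subobject.ofLE v t hv2 ≫ t.arrow) ≫ q ≫ g := by simp only [Category.assoc]
            _ = v.arrow ≫ q ≫ g := by rw [Subobject.ofLE_arrow]
        rw [heq, hva]
      have hz := zero_of_comp_mono (φ ≫ g) h0
      have hva0 : v.arrow = 0 := by
        rw [← Subobject.ofLE_arrow hv2, hz, zero_comp]
      exact eq_bot_of_arrow_eq_zero hva0
    have hsC : kernelSubobject (q ≫ g) = Cm := hmax _ hdisj hCle
    apply Abelian.mono_of_kernel_ι_eq_zero
    haveI : Epi (pullback.fst (kernel.ι g) q) := by infer_instance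
    apply zero_of_epi_comp (pullback.fst (kernel.ι g) q)
    have hsnd : pullback.snd (kernel.ι g) q ≫ q ≫ g = 0 := by
      rw [← Category.assoc, ← pullback.condition, Category.assoc, kernel.condition, comp_zero]
    have hfac := factorThruKernelSubobject_comp_arrow (q ≫ g) (pullback.snd (kernel.ι g) q) hsnd
    have harr : (kernelSubobject (q ≫ g)).arrow ≫ q = 0 := by
      calc (kernelSubobject (q ≫ g)).arrow ≫ q
          = (Subobject.ofLE _ Cm hsC.le ≫ Cm.arrow) ≫ q := by
            rw [Subobject.ofLE_arrow hsC.le]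
        _ = Subobject.ofLE _ Cm hsC.le ≫ (Cm.arrow ≫ q) := Category.assoc _ _ _
        _ = 0 := by
            have hCq : Cm.arrow ≫ q = 0 := by rw [hq]; exact cokernel.condition _
            rw [hCq, comp_zero]
    have hsq : pullback.snd (kernel.ι g) q ≫ q = 0 := by
      rw [← hfac, Category.assoc, harr, comp_zero]
    rw [pullback.condition, hsq]
  -- stability: the essential extension `cokernel Cm.arrow` of `t` is torsion
  have hPQ : P (cokernel Cm.arrow) := hP.stable φ hess ht.1
  haveI := hφmono
  obtain ⟨ρ, hρ⟩ := hY.factors t.arrow φ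
  have hPimg : P ((imageSubobject ρ : C)) := by
    have himg : P (image ρ) := hP.quot (factorThruImage ρ) inferInstance hPQ
    exact hP.iso (imageSubobjectIso ρ).symm himg
  have himt : imageSubobject ρ ≤ t := ht.2 _ hPimg
  -- the retraction r : Y ⟶ t
  set r : Y ⟶ (t : C) := q ≫ factorThruImageSubobject ρ ≫ Subobject.ofLE _ t himt with hr
  have htr : t.arrow ≫ r = 𝟙 (t : C) := by
    rw [← cancel_mono t.arrow]
    have heq : (t.arrow ≫ r) ≫ t.arrow = φ ≫ ρ := by
      rw [hr, hφ]
      calc (t.arrow ≫ q ≫ factorThruImageSubobject ρ ≫ Subobject.ofLE _ t himt) ≫ t.arrow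
          = t.arrow ≫ q ≫ factorThruImageSubobject ρ ≫
              (Subobject.ofLE _ t himt ≫ t.arrow) := by simp only [Category.assoc]
        _ = t.arrow ≫ q ≫ factorThruImageSubobject ρ ≫ (imageSubobject ρ).arrow := by
              rw [Subobject.ofLE_arrow]
        _ = t.arrow ≫ q ≫ ρ := by rw [imageSubobject_arrow_comp]
        _ = (t.arrow ≫ q) ≫ ρ := by simp only [Category.assoc]
    rw [heq, hρ, Category.id_comp]
  -- t is injective
  have htinj : Injective ((t : C)) := by
    constructor
    intro A B g f hf
    exact ⟨Injective.factorThru (g ≫ t.arrow) f ≫ r, by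
      rw [← Category.assoc, Injective.comp_factorThru, Category.assoc, htr, Category.comp_id]⟩
  -- the binary bicone Y ≅ t ⊞ kernel r
  have hlft_cond : (𝟙 Y - r ≫ t.arrow) ≫ r = 0 := by
    rw [Preadditive.sub_comp, Category.id_comp, Category.assoc, htr, Category.comp_id, sub_self]
  set lft : Y ⟶ kernel r := kernel.lift r (𝟙 Y - r ≫ t.arrow) hlft_cond with hlft
  have hlft_ι : lft ≫ kernel.ι r = 𝟙 Y - r ≫ t.arrow := kernel.lift_ι _ _ _
  have hinl_snd : t.arrow ≫ lft = 0 := by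
    rw [← cancel_mono (kernel.ι r), Category.assoc, hlft_ι, zero_comp,
      Preadditive.comp_sub, Category.comp_id, ← Category.assoc, htr, Category.id_comp, sub_self]
  have hinr_snd : kernel.ι r ≫ lft = 𝟙 (kernel r) := by
    rw [← cancel_mono (kernel.ι r), Category.assoc, hlft_ι, Category.id_comp,
      Preadditive.comp_sub, Category.comp_id, ← Category.assoc, kernel.condition, zero_comp,
      sub_zero]
  let b : BinaryBicone ((t : C)) (kernel r) :=
    { pt := Y, fst := r, snd := lft, inl := t.arrow, inr := kernel.ι r,
      inl_fst := htr, inl_snd := hinl_snd, inr_fst := kernel.condition r, inr_snd := hinr_snd }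
  have hb : b.IsBilimit := isBinaryBilimitOfTotal b (by
    show r ≫ t.arrow + lft ≫ kernel.ι r = 𝟙 Y
    rw [hlft_ι]
    abel)
  have isoY : Y ≅ (t : C) ⊞ kernel r := biprod.uniqueUpToIso _ _ hb
  -- kernel r is injective
  have hKinj : Injective (kernel r) := by
    constructor
    intro A B g f hf
    exact ⟨Injective.factorThru (g ≫ kernel.ι r) f ≫ lft, by
      rw [← Category.assoc, Injective.comp_factorThru, Category.assoc, hinr_snd,
        Category.comp_id]⟩
  -- T inverts the inclusion of kernel r
  have hTt : IsZero (Q.T.obj ((t : C))) := (Q.ker _).1 ht.1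
  have hTarrow : Q.T.map t.arrow = 0 := hTt.eq_of_src _ _
  have hTι1 : Q.T.map (kernel.ι r) ≫ Q.T.map lft = 𝟙 _ := by
    rw [← Q.T.map_comp, hinr_snd, Q.T.map_id]
  have hTι2 : Q.T.map lft ≫ Q.T.map (kernel.ι r) = 𝟙 _ := by
    rw [← Q.T.map_comp, hlft_ι, Functor.map_sub, Q.T.map_id, Q.T.map_comp, hTarrow, comp_zero,
      sub_zero]
  haveI hTι : IsIso (Q.T.map (kernel.ι r)) := ⟨Q.T.map lft, hTι1, hTι2⟩
  -- kernels of maps inverted by T are torsion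
  have kerP : ∀ {A B : C} (f : A ⟶ B), IsIso (Q.T.map f) → P (kernel f) := by
    intro A B f hf
    refine (Q.ker _).2 ?_
    haveI := hf
    have e : Q.T.obj (kernel f) ≅ kernel (Q.T.map f) := PreservesKernel.iso Q.T f
    exact (isZero_zero D).of_iso (e ≪≫ kernel.ofMono (Q.T.map f))
  -- the unit on kernel r is an isomorphism
  set η : kernel r ⟶ Q.S.obj (Q.T.obj (kernel r)) := Q.adj.unit.app (kernel r) with hη
  have hTη : IsIso (Q.T.map η) := by
    have tri : Q.T.map η ≫ Q.adj.counit.app (Q.T.obj (kernel r)) = 𝟙 _ := by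
      rw [hη]; exact Q.adj.left_triangle_components (kernel r)
    haveI : IsIso (Q.T.map η ≫ Q.adj.counit.app (Q.T.obj (kernel r))) := by
      rw [tri]; infer_instance
    exact IsIso.of_isIso_comp_right (Q.T.map η) (Q.adj.counit.app (Q.T.obj (kernel r)))
  have hkηP : P (kernel η) := kerP η hTη
  have hdisj2 : t ⊓ Subobject.mk (kernel.ι r) = ⊥ := by
    set v := t ⊓ Subobject.mk (kernel.ι r) with hv
    have hv1 : v ≤ t := inf_le_left
    have hv2 : v ≤ Subobject.mk (kernel.ι r) := inf_le_right
    have e1 : v.arrow ≫ r = Subobject.ofLE v t hv1 := by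
      rw [← Subobject.ofLE_arrow hv1, Category.assoc, htr, Category.comp_id]
    have e2 : v.arrow ≫ r = 0 := by
      rw [← Subobject.ofLEMk_comp hv2, Category.assoc, kernel.condition, comp_zero]
    apply eq_bot_of_arrow_eq_zero
    rw [← Subobject.ofLE_arrow hv1, ← e1, e2, zero_comp]
  have hw0 : kernel.ι η ≫ kernel.ι r = 0 := by
    have hmkle_t : Subobject.mk (kernel.ι η ≫ kernel.ι r) ≤ t :=
      ht.2 _ (hP.iso (Subobject.underlyingIso _).symm hkηP)
    have hmkle_k : Subobject.mk (kernel.ι η ≫ kernel.ι r) ≤ Subobject.mk (kernel.ι r) :=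
      Subobject.mk_le_mk_of_comm (kernel.ι η) rfl
    have hb2 : Subobject.mk (kernel.ι η ≫ kernel.ι r) = ⊥ :=
      le_bot_iff.1 (hdisj2 ▸ le_inf hmkle_t hmkle_k)
    exact Subobject.mk_eq_bot_iff_zero.1 hb2
  have hηmono : Mono η := Abelian.mono_of_kernel_ι_eq_zero _ (zero_of_comp_mono (kernel.ι r) hw0)
  haveI := hηmono
  obtain ⟨σ, hσ⟩ := hKinj.factors (𝟙 (kernel r)) η
  have hTσ : IsIso (Q.T.map σ) := by
    haveI : IsIso (Q.T.map η ≫ Q.T.map σ) := by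
      rw [← Q.T.map_comp, hσ, Q.T.map_id]; infer_instance
    exact IsIso.of_isIso_comp_left (Q.T.map η) (Q.T.map σ)
  have hkσP : P (kernel σ) := kerP σ hTσ
  have hσι : kernel.ι σ = 0 :=
    hom_eq_zero_of_isZero_T Q ((Q.ker _).1 hkσP) (kernel.ι σ)
  haveI hσmono : Mono σ := Abelian.mono_of_kernel_ι_eq_zero _ hσι
  haveI hσepi : IsSplitEpi σ := ⟨⟨η, hσ⟩⟩
  haveI : IsIso σ := isIso_of_mono_of_epi σ
  haveI hηiso : IsIso η := by
    have heq : η = inv σ := by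
      rw [← cancel_mono σ, hσ, IsIso.inv_hom_id]
    rw [heq]; infer_instance
  exact ⟨⟨isoY ≪≫ biprod.mapIso (Iso.refl _)
    (asIso η ≪≫ Q.S.mapIso (asIso (Q.T.map (kernel.ι r))))⟩, htinj⟩


end CentralSheaf
end

section
/- Let C be a Grothendieck category and L₀, L₁ localizing subcategories. The natural functor R : C/(L₀ ∩ L₁) → (C/L₀) ×_{C/(L₀∨L₁)} (C/L₁) given by X ↦ (Q₀(X), Q₁(X), id) is exact and faithful. -/
open CategoryTheory Limits

universe w v u u₂ u₃ u₄ u₅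

namespace CentralSheaf

variable {C : Type u} [Category.{v} C] [Abelian C]

section Recollement

variable {D₀ : Type u₂} [Category.{v} D₀] {D₁ : Type u₃} [Category.{v} D₁]
  {E : Type u₄} [Category.{v} E]

/-- Gabriel's recollement (fiber product) category of `F₀ : D₀ ⥤ E` and
`F₁ : D₁ ⥤ E`: objects are triples `(X₀, X₁, σ)` where `σ : F₀(X₀) ≅ F₁(X₁)`,
realized as the full subcategory of the comma category `Comma F₀ F₁` on those
objects whose structure morphism is an isomorphism. -/
abbrev Recollement (F₀ : D₀ ⥤ E) (F₁ : D₁ ⥤ E) : Type _ :=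
  ObjectProperty.FullSubcategory (fun X : Comma F₀ F₁ => IsIso X.hom)

/-- The canonical comparison functor `D ⥤ Recollement F₀ F₁` induced by functors
`G₀ : D ⥤ D₀`, `G₁ : D ⥤ D₁` and a natural isomorphism `G₀ ⋙ F₀ ≅ G₁ ⋙ F₁`,
sending `X` to `(G₀(X), G₁(X), σ_X)`. -/
@[simps] def gluing {D : Type u₅} [Category.{v} D] (F₀ : D₀ ⥤ E) (F₁ : D₁ ⥤ E)
    (G₀ : D ⥤ D₀) (G₁ : D ⥤ D₁) (σ : G₀ ⋙ F₀ ≅ G₁ ⋙ F₁) :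
    D ⥤ Recollement F₀ F₁ where
  obj X := ⟨⟨G₀.obj X, G₁.obj X, σ.hom.app X⟩, inferInstance⟩
  map f := ⟨⟨G₀.map f, G₁.map f, by simpa using σ.hom.naturality f⟩⟩

end Recollement

section Auxiliary

namespace QuotientData

variable {B : Type u₂} [Category.{v} B] [Abelian B] {P : C → Prop}

/-- The counit of the adjunction of a quotient data is an isomorphism. -/
noncomputable def counitIso (Qd : QuotientData P B) : Qd.S ⋙ Qd.T ≅ 𝟭 B := by
  haveI := Qd.fullS; haveI := Qd.faithfulS
  exact asIso Qd.adj.counit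

/-- The quotient functor kills a morphism iff its image lies in the kernel. -/
lemma map_eq_zero_of_p_image (Qd : QuotientData P B) {A A' : C} {h : A ⟶ A'}
    (hP : P (Abelian.image h)) : Qd.T.map h = 0 := by
  haveI := Qd.additive
  have hz : IsZero (Qd.T.obj (Abelian.image h)) := (Qd.ker _).mp hP
  have : Qd.T.map (Abelian.image.ι h) = 0 := hz.eq_zero_of_src _
  rw [← Abelian.image.fac h, Qd.T.map_comp, this, comp_zero]

lemma p_image_of_map_eq_zero (Qd : QuotientData P B) {A A' : C} {h : A ⟶ A'}
    (hz : Qd.T.map h = 0) : P (Abelian.image h) := by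
  haveI := Qd.additive
  haveI := Qd.preservesFiniteLimits
  haveI : PreservesColimitsOfSize.{0, 0} Qd.T := Qd.adj.leftAdjoint_preservesColimits
  have h1 : Qd.T.map (Abelian.factorThruImage h) ≫ Qd.T.map (Abelian.image.ι h) = 0 := by
    rw [← Qd.T.map_comp, Abelian.image.fac h, hz]
  have h2 : Qd.T.map (Abelian.image.ι h) = 0 := by
    rw [← cancel_epi (Qd.T.map (Abelian.factorThruImage h)), h1, comp_zero]
  exact (Qd.ker _).mpr (IsZero.of_mono_eq_zero _ h2)

/-- If the quotient functor inverts a morphism, then so does every exact functor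
killing the kernel of the quotient. -/
lemma isIso_map_of_isIso_map (Qd : QuotientData P B)
    {B' : Type u₃} [Category.{v} B'] [Abelian B'] (K : C ⥤ B')
    [K.Additive] [PreservesFiniteLimits K] [PreservesFiniteColimits K]
    (hker : ∀ X : C, P X → IsZero (K.obj X)) {A A' : C} (w : A ⟶ A')
    (hT : IsIso (Qd.T.map w)) : IsIso (K.map w) := by
  haveI := Qd.additive
  haveI := Qd.preservesFiniteLimits
  haveI : PreservesColimitsOfSize.{0, 0} Qd.T := Qd.adj.leftAdjoint_preservesColimits
  -- the kernel of `w` is killed by `T`, hence by `K`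
  have hk0 : Qd.T.map (kernel.ι w) = 0 := by
    have h1 : Qd.T.map (kernel.ι w) ≫ Qd.T.map w = 0 := by
      rw [← Qd.T.map_comp, kernel.condition, Functor.map_zero]
    rw [← cancel_mono (Qd.T.map w), h1, zero_comp]
  have hPk : P (kernel w) := (Qd.ker _).mpr (by
    haveI : Mono (Qd.T.map (kernel.ι w)) := Qd.T.map_mono _
    exact IsZero.of_mono_eq_zero _ hk0)
  have hkK : IsZero (kernel (K.map w)) :=
    (hker _ hPk).of_iso (PreservesKernel.iso K w).symm
  haveI hmono : Mono (K.map w) := Abelian.mono_of_kernel_ι_eq_zero _ (hkK.eq_zero_of_src _)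
  -- the cokernel of `w` is killed by `T`, hence by `K`
  have hc0 : Qd.T.map (cokernel.π w) = 0 := by
    have h1 : Qd.T.map w ≫ Qd.T.map (cokernel.π w) = 0 := by
      rw [← Qd.T.map_comp, cokernel.condition, Functor.map_zero]
    rw [← cancel_epi (Qd.T.map w), h1, comp_zero]
  have hPc : P (cokernel w) := (Qd.ker _).mpr (by
    haveI : Epi (Qd.T.map (cokernel.π w)) := Qd.T.map_epi _
    exact IsZero.of_epi_eq_zero _ hc0)
  have hcK : IsZero (cokernel (K.map w)) :=
    (hker _ hPc).of_iso (PreservesCokernel.iso K w).symm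
  haveI hepi : Epi (K.map w) := Abelian.epi_of_cokernel_π_eq_zero _ (hcK.eq_zero_of_tgt _)
  exact isIso_of_mono_of_epi _

/-- An exact functor `K` on `C` killing the kernel `P` descends, after composition with the
section functor, to a cokernel-preserving functor on the quotient. -/
lemma preservesCokernel_S_comp (Qd : QuotientData P B)
    {B' : Type u₃} [Category.{v} B'] [Abelian B'] (K : C ⥤ B')
    [K.Additive] [PreservesFiniteLimits K] [PreservesFiniteColimits K]
    (hker : ∀ X : C, P X → IsZero (K.obj X)) {X Y : B} (f : X ⟶ Y) :
    PreservesColimit (parallelPair f 0) (Qd.S ⋙ K) := by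
  haveI := Qd.additive
  haveI := Qd.preservesFiniteLimits
  haveI := Qd.fullS; haveI := Qd.faithfulS
  haveI : PreservesColimitsOfSize.{0, 0} Qd.T := Qd.adj.leftAdjoint_preservesColimits
  haveI : Qd.S.IsRightAdjoint := ⟨Qd.T, ⟨Qd.adj⟩⟩
  have hcond : Qd.S.map f ≫ Qd.S.map (cokernel.π f) = 0 := by
    rw [← Qd.S.map_comp, cokernel.condition, Functor.map_zero]
  let u : cokernel (Qd.S.map f) ⟶ Qd.S.obj (cokernel f) :=
    cokernel.desc (Qd.S.map f) (Qd.S.map (cokernel.π f)) hcond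
  have hu : cokernel.π (Qd.S.map f) ≫ u = Qd.S.map (cokernel.π f) :=
    cokernel.π_desc _ _ _
  -- `T u` is an isomorphism
  have hT1 : IsColimit (CokernelCofork.ofπ (Qd.T.map (cokernel.π (Qd.S.map f)))
      (by rw [← Qd.T.map_comp, cokernel.condition, Functor.map_zero]) :
        Cofork (Qd.T.map (Qd.S.map f)) 0) :=
    isColimitCoforkMapOfIsColimit' Qd.T (cokernel.condition (Qd.S.map f))
      (cokernelIsCokernel (Qd.S.map f))
  haveI : PreservesColimit (parallelPair f 0) (Qd.S ⋙ Qd.T) :=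
    preservesColimit_of_natIso _ Qd.counitIso.symm
  have hT2 : IsColimit (CokernelCofork.ofπ (Qd.T.map (Qd.S.map (cokernel.π f)))
      (by rw [← Qd.T.map_comp, ← Qd.S.map_comp, cokernel.condition,
        Functor.map_zero, Functor.map_zero]) :
        Cofork (Qd.T.map (Qd.S.map f)) 0) :=
    isColimitCoforkMapOfIsColimit' (Qd.S ⋙ Qd.T) (cokernel.condition f)
      (cokernelIsCokernel f)
  have hTu : IsIso (Qd.T.map u) := by
    have heq : Qd.T.map u = (hT1.coconePointUniqueUpToIso hT2).hom := by
      apply Cofork.IsColimit.hom_ext hT1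
      have h1 := hT1.comp_coconePointUniqueUpToIso_hom hT2 WalkingParallelPair.one
      dsimp at h1 ⊢
      rw [h1, ← Qd.T.map_comp, hu]
    rw [heq]; infer_instance
  have hKu : IsIso (K.map u) := Qd.isIso_map_of_isIso_map K hker u hTu
  -- transfer the colimit property
  refine preservesColimit_of_preserves_colimit_cocone (cokernelIsCokernel f) ?_
  refine (isColimitMapCoconeCoforkEquiv' (Qd.S ⋙ K) (cokernel.condition f)).symm ?_
  have hK1 : IsColimit (CokernelCofork.ofπ (K.map (cokernel.π (Qd.S.map f)))
      (by rw [← K.map_comp, cokernel.condition, Functor.map_zero]) :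
        Cofork (K.map (Qd.S.map f)) 0) :=
    isColimitCoforkMapOfIsColimit' K (cokernel.condition (Qd.S.map f))
      (cokernelIsCokernel (Qd.S.map f))
  have hπ : (Qd.S ⋙ K).map (cokernel.π f)
      = K.map (cokernel.π (Qd.S.map f)) ≫ K.map u := by
    rw [← K.map_comp, hu]; rfl
  haveI : Epi ((Qd.S ⋙ K).map (cokernel.π f)) := by
    rw [hπ]; exact epi_comp _ _
  refine CokernelCofork.IsColimit.ofπ' _ _ (fun {A} k hk => ?_)
  obtain ⟨l, hl⟩ := CokernelCofork.IsColimit.desc' hK1 k hk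
  refine ⟨inv (K.map u) ≫ l, ?_⟩
  rw [hπ, Category.assoc, IsIso.hom_inv_id_assoc]
  exact hl

/-- The master exactness lemma: a functor on the quotient category which becomes exact
after composition with the quotient functor is exact. -/
lemma preserves_of_comp_iso (Qd : QuotientData P B)
    {B' : Type u₃} [Category.{v} B'] [Abelian B'] (H : B ⥤ B') (K : C ⥤ B')
    [K.Additive] [PreservesFiniteLimits K] [PreservesFiniteColimits K]
    (e : Qd.T ⋙ H ≅ K) (hker : ∀ X : C, P X → IsZero (K.obj X)) :
    PreservesFiniteLimits H ∧ PreservesFiniteColimits H := by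
  haveI := Qd.fullS; haveI := Qd.faithfulS
  haveI : Qd.S.IsRightAdjoint := ⟨Qd.T, ⟨Qd.adj⟩⟩
  haveI : PreservesLimitsOfSize.{0, 0} Qd.S := Qd.adj.rightAdjoint_preservesLimits
  haveI : PreservesFiniteLimits Qd.S := PreservesLimitsOfSize.preservesFiniteLimits _
  haveI : PreservesFiniteLimits (Qd.S ⋙ K) := comp_preservesFiniteLimits _ _
  haveI : ∀ {X Y : B} (f : X ⟶ Y), PreservesColimit (parallelPair f 0) (Qd.S ⋙ K) :=
    fun f => Qd.preservesCokernel_S_comp K hker f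
  haveI : PreservesFiniteColimits (Qd.S ⋙ K) :=
    Functor.preservesFiniteColimits_of_preservesCokernels _
  have eH : H ≅ Qd.S ⋙ K :=
    H.leftUnitor.symm ≪≫ Functor.isoWhiskerRight Qd.counitIso.symm H ≪≫
      Functor.associator _ _ _ ≪≫ Functor.isoWhiskerLeft Qd.S e
  exact ⟨preservesFiniteLimits_of_natIso eH.symm,
    preservesFiniteColimits_of_natIso eH.symm⟩

end QuotientData

section RecollementPreserve

variable {D₀ : Type u₂} [Category.{v} D₀] {D₁ : Type u₃} [Category.{v} D₁]
  {E' : Type u₄} [Category.{v} E'] {D : Type u₅} [Category.{v} D]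
  (F₀ : D₀ ⥤ E') (F₁ : D₁ ⥤ E') (G₀ : D ⥤ D₀) (G₁ : D ⥤ D₁) (σ : G₀ ⋙ F₀ ≅ G₁ ⋙ F₁)
  {J : Type w} [Category.{w} J]

/-- The gluing functor preserves limits of any shape preserved by the components. -/
lemma gluing_preservesLimitsOfShape
    [PreservesLimitsOfShape J G₀] [PreservesLimitsOfShape J G₁]
    [PreservesLimitsOfShape J (G₁ ⋙ F₁)] :
    PreservesLimitsOfShape J (gluing F₀ F₁ G₀ G₁ σ) := by
  constructor; intro K
  constructor; intro c hc
  have l₀ := isLimitOfPreserves G₀ hc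
  have l₁ := isLimitOfPreserves G₁ hc
  have lF := isLimitOfPreserves (G₁ ⋙ F₁) hc
  constructor
  let s₀ : ∀ s : Cone (K ⋙ gluing F₀ F₁ G₀ G₁ σ), Cone (K ⋙ G₀) := fun s =>
    { pt := s.pt.obj.left
      π := { app := fun j => (s.π.app j).hom.left
             naturality := fun i j g => by
               erw [Category.id_comp]
               have h := congrArg (fun f => f.hom.left) (s.π.naturality g)
               simp at h; exact h } }
  let s₁ : ∀ s : Cone (K ⋙ gluing F₀ F₁ G₀ G₁ σ), Cone (K ⋙ G₁) := fun s =>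
    { pt := s.pt.obj.right
      π := { app := fun j => (s.π.app j).hom.right
             naturality := fun i j g => by
               erw [Category.id_comp]
               have h := congrArg (fun f => f.hom.right) (s.π.naturality g)
               simp at h; exact h } }
  refine IsLimit.mk (fun s => ?_) (fun s j => ?_) (fun s m hm => ?_)
  · refine ⟨⟨l₀.lift (s₀ s), l₁.lift (s₁ s), ?_⟩⟩
    apply lF.hom_ext
    intro j
    have hw := (s.π.app j).hom.w
    have f0 := l₀.fac (s₀ s) j
    have f1 := l₁.fac (s₁ s) j
    have hσn := σ.hom.naturality (c.π.app j)
    dsimp at hw f0 f1 hσn ⊢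
    erw [Category.assoc, Category.assoc, ← F₁.map_comp, f1, ← hw, ← hσn,
      ← Category.assoc, ← F₀.map_comp, f0]
    rfl
  · apply ObjectProperty.hom_ext
    apply CommaMorphism.ext
    · exact l₀.fac (s₀ s) j
    · exact l₁.fac (s₁ s) j
  · apply ObjectProperty.hom_ext
    apply CommaMorphism.ext
    · refine l₀.uniq (s₀ s) m.hom.left (fun j => ?_)
      have h := congrArg (fun f => f.hom.left) (hm j)
      simp at h; exact h
    · refine l₁.uniq (s₁ s) m.hom.right (fun j => ?_)
      have h := congrArg (fun f => f.hom.right) (hm j)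
      simp at h; exact h

/-- The gluing functor preserves colimits of any shape preserved by the components. -/
lemma gluing_preservesColimitsOfShape
    [PreservesColimitsOfShape J G₀] [PreservesColimitsOfShape J G₁]
    [PreservesColimitsOfShape J (G₀ ⋙ F₀)] :
    PreservesColimitsOfShape J (gluing F₀ F₁ G₀ G₁ σ) := by
  constructor; intro K
  constructor; intro c hc
  have l₀ := isColimitOfPreserves G₀ hc
  have l₁ := isColimitOfPreserves G₁ hc
  have lF := isColimitOfPreserves (G₀ ⋙ F₀) hc
  constructor
  let s₀ : ∀ s : Cocone (K ⋙ gluing F₀ F₁ G₀ G₁ σ), Cocone (K ⋙ G₀) := fun s =>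
    { pt := s.pt.obj.left
      ι := { app := fun j => (s.ι.app j).hom.left
             naturality := fun i j g => by
               erw [Category.comp_id]
               have h := congrArg (fun f => f.hom.left) (s.ι.naturality g)
               simp at h; exact h } }
  let s₁ : ∀ s : Cocone (K ⋙ gluing F₀ F₁ G₀ G₁ σ), Cocone (K ⋙ G₁) := fun s =>
    { pt := s.pt.obj.right
      ι := { app := fun j => (s.ι.app j).hom.right
             naturality := fun i j g => by
               erw [Category.comp_id]
               have h := congrArg (fun f => f.hom.right) (s.ι.naturality g)
               simp at h; exact h } }
  refine IsColimit.mk (fun s => ?_) (fun s j => ?_) (fun s m hm => ?_)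
  · refine ⟨⟨l₀.desc (s₀ s), l₁.desc (s₁ s), ?_⟩⟩
    apply lF.hom_ext
    intro j
    have hw := (s.ι.app j).hom.w
    have f0 := l₀.fac (s₀ s) j
    have f1 := l₁.fac (s₁ s) j
    have hσn := σ.hom.naturality (c.ι.app j)
    dsimp at hw f0 f1 hσn ⊢
    erw [← Category.assoc, ← F₀.map_comp, f0, hw, ← Category.assoc, hσn,
      Category.assoc, ← F₁.map_comp, f1]
    rfl
  · apply ObjectProperty.hom_ext
    apply CommaMorphism.ext
    · exact l₀.fac (s₀ s) j
    · exact l₁.fac (s₁ s) j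
  · apply ObjectProperty.hom_ext
    apply CommaMorphism.ext
    · refine l₀.uniq (s₀ s) m.hom.left (fun j => ?_)
      have h := congrArg (fun f => f.hom.left) (hm j)
      simp at h; exact h
    · refine l₁.uniq (s₁ s) m.hom.right (fun j => ?_)
      have h := congrArg (fun f => f.hom.right) (hm j)
      simp at h; exact h

end RecollementPreserve

end Auxiliary

/-- For localizing subcategories `L₀`, `L₁` of a Grothendieck
category `C`, the natural functor
`R : C/(L₀ ∩ L₁) ⥤ (C/L₀) ×_{C/(L₀∨L₁)} (C/L₁)`, `X ↦ (Q₀(X), Q₁(X), id)`,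
into Gabriel's recollement category is exact and faithful. Here the quotient
categories are given by quotient data, the functors `Q₀, Q₁, F₀, F₁` are
(arbitrary) functors compatible with the quotient functors, and `σ` is the
natural isomorphism `F₀ ∘ Q₀ ≅ F₁ ∘ Q₁` induced by the identity, i.e.
compatible with the quotient functors from `C`. -/
theorem gluing_exact_faithful
    [HasColimits C] [AB5 C] (hsep : ∃ G : C, IsSeparator G)
    {D : Type u₅} [Category.{v} D] [Abelian D]
    {D₀ : Type u₂} [Category.{v} D₀] [Abelian D₀]
    {D₁ : Type u₃} [Category.{v} D₁] [Abelian D₁]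
    {E : Type u₄} [Category.{v} E] [Abelian E]
    (P₀ P₁ P₃ : C → Prop)
    (h₀ : IsLocalizing P₀) (h₁ : IsLocalizing P₁) (hjoin : IsJoin P₀ P₁ P₃)
    (Qm : QuotientData (fun X => P₀ X ∧ P₁ X) D)
    (Q₀ : QuotientData P₀ D₀) (Q₁ : QuotientData P₁ D₁)
    (Qj : QuotientData P₃ E)
    (G₀ : D ⥤ D₀) (G₁ : D ⥤ D₁) (F₀ : D₀ ⥤ E) (F₁ : D₁ ⥤ E)
    (e₀ : Qm.T ⋙ G₀ ≅ Q₀.T) (e₁ : Qm.T ⋙ G₁ ≅ Q₁.T)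
    (f₀ : Q₀.T ⋙ F₀ ≅ Qj.T) (f₁ : Q₁.T ⋙ F₁ ≅ Qj.T)
    (σ : G₀ ⋙ F₀ ≅ G₁ ⋙ F₁)
    (hσ : ∀ X : C, σ.hom.app (Qm.T.obj X) ≫ F₁.map (e₁.hom.app X) ≫ f₁.hom.app X
      = F₀.map (e₀.hom.app X) ≫ f₀.hom.app X) :
    (gluing F₀ F₁ G₀ G₁ σ).Faithful ∧
    PreservesFiniteLimits (gluing F₀ F₁ G₀ G₁ σ) ∧
    PreservesFiniteColimits (gluing F₀ F₁ G₀ G₁ σ) := by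
  haveI := Qm.additive; haveI := Q₀.additive; haveI := Q₁.additive; haveI := Qj.additive
  haveI := Q₀.preservesFiniteLimits; haveI := Q₁.preservesFiniteLimits
  haveI := Qj.preservesFiniteLimits; haveI := Qm.preservesFiniteLimits
  haveI : PreservesColimitsOfSize.{0, 0} Q₀.T := Q₀.adj.leftAdjoint_preservesColimits
  haveI : PreservesFiniteColimits Q₀.T := PreservesColimitsOfSize.preservesFiniteColimits _
  haveI : PreservesColimitsOfSize.{0, 0} Q₁.T := Q₁.adj.leftAdjoint_preservesColimits
  haveI : PreservesFiniteColimits Q₁.T := PreservesColimitsOfSize.preservesFiniteColimits _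
  haveI : PreservesColimitsOfSize.{0, 0} Qj.T := Qj.adj.leftAdjoint_preservesColimits
  haveI : PreservesFiniteColimits Qj.T := PreservesColimitsOfSize.preservesFiniteColimits _
  -- exactness of the component functors
  have hG₀ := Qm.preserves_of_comp_iso G₀ Q₀.T e₀ (fun X hX => (Q₀.ker X).mp hX.1)
  have hG₁ := Qm.preserves_of_comp_iso G₁ Q₁.T e₁ (fun X hX => (Q₁.ker X).mp hX.2)
  have hGF₀ := Qm.preserves_of_comp_iso (G₀ ⋙ F₀) Qj.T
    ((Functor.associator _ _ _).symm ≪≫ Functor.isoWhiskerRight e₀ F₀ ≪≫ f₀)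
    (fun X hX => (Qj.ker X).mp (hjoin.2.1 X hX.1))
  have hGF₁ := Qm.preserves_of_comp_iso (G₁ ⋙ F₁) Qj.T
    ((Functor.associator _ _ _).symm ≪≫ Functor.isoWhiskerRight e₁ F₁ ≪≫ f₁)
    (fun X hX => (Qj.ker X).mp (hjoin.2.1 X hX.1))
  haveI := hG₀.1; haveI := hG₀.2; haveI := hG₁.1; haveI := hG₁.2
  haveI := hGF₀.1; haveI := hGF₀.2; haveI := hGF₁.1; haveI := hGF₁.2
  refine ⟨?_, ?_, ?_⟩
  · -- faithfulness
    haveI := Qm.fullS; haveI := Qm.faithfulS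
    refine ⟨fun {X Y} {α β} h => ?_⟩
    have h0 : G₀.map α = G₀.map β := congrArg (fun f => f.hom.left) h
    have h1 : G₁.map α = G₁.map β := congrArg (fun f => f.hom.right) h
    have hTS : ∀ γ : X ⟶ Y, Qm.T.map (Qm.S.map γ)
        = Qm.adj.counit.app X ≫ γ ≫ inv (Qm.adj.counit.app Y) := by
      intro γ
      have h' := Qm.adj.counit.naturality γ
      dsimp at h'
      rw [← Category.assoc, ← h', Category.assoc, IsIso.hom_inv_id, Category.comp_id]
    have key0 : Q₀.T.map (Qm.S.map α) = Q₀.T.map (Qm.S.map β) := by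
      have nα := e₀.hom.naturality (Qm.S.map α)
      have nβ := e₀.hom.naturality (Qm.S.map β)
      dsimp at nα nβ
      rw [← cancel_epi (e₀.hom.app (Qm.S.obj X)), ← nα, ← nβ, hTS α, hTS β,
        G₀.map_comp, G₀.map_comp, G₀.map_comp, G₀.map_comp, h0]
    have key1 : Q₁.T.map (Qm.S.map α) = Q₁.T.map (Qm.S.map β) := by
      have nα := e₁.hom.naturality (Qm.S.map α)
      have nβ := e₁.hom.naturality (Qm.S.map β)
      dsimp at nα nβ
      rw [← cancel_epi (e₁.hom.app (Qm.S.obj X)), ← nα, ← nβ, hTS α, hTS β,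
        G₁.map_comp, G₁.map_comp, G₁.map_comp, G₁.map_comp, h1]
    have hz0 : Q₀.T.map (Qm.S.map α - Qm.S.map β) = 0 := by
      rw [Functor.map_sub, key0, sub_self]
    have hz1 : Q₁.T.map (Qm.S.map α - Qm.S.map β) = 0 := by
      rw [Functor.map_sub, key1, sub_self]
    have himg : Qm.T.map (Qm.S.map α - Qm.S.map β) = 0 :=
      Qm.map_eq_zero_of_p_image
        ⟨Q₀.p_image_of_map_eq_zero hz0, Q₁.p_image_of_map_eq_zero hz1⟩
    have hTeq : Qm.T.map (Qm.S.map α) = Qm.T.map (Qm.S.map β) := by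
      rw [Functor.map_sub] at himg
      exact sub_eq_zero.mp himg
    rw [hTS α, hTS β] at hTeq
    have h2 := (cancel_epi (Qm.adj.counit.app X)).mp hTeq
    exact (cancel_mono (inv (Qm.adj.counit.app Y))).mp h2
  · exact ⟨fun J _ _ => gluing_preservesLimitsOfShape F₀ F₁ G₀ G₁ σ⟩
  · exact ⟨fun J _ _ => gluing_preservesColimitsOfShape F₀ F₁ G₀ G₁ σ⟩

end CentralSheaf
end

section
/- Let C be a Grothendieck category and E an injective cogenerator such that every object of C embeds into a direct sum of copies of E. Then the evaluation map Z(C) → Z(End_C(E)), sending a natural endomorphism z of the identity functor to its component z_E, is a ring isomorphism onto the center of the endomorphism ring of E. -/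
open CategoryTheory Limits

universe w v u u₂ u₃ u₄ u₅

namespace CentralSheaf

variable {C : Type u} [Category.{v} C] [Abelian C]

section CenterAux

variable {E : C}

/-- If `E` is an injective cogenerator, a morphism all of whose composites to `E`
vanish is zero. -/
lemma cogen_cancel (hE : Injective E)
    (hcog : ∀ M : C, ¬ IsZero M → ∃ f : M ⟶ E, f ≠ 0)
    {X Y : C} (f : X ⟶ Y) (hf : ∀ h : Y ⟶ E, f ≫ h = 0) : f = 0 := by
  by_contra hne
  have himg : ¬ IsZero (image f) := by
    intro hz
    apply hne
    rw [← image.fac f, hz.eq_of_src (image.ι f) 0, comp_zero]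
  obtain ⟨p, hp⟩ := hcog _ himg
  obtain ⟨h', hh'⟩ := hE.factors p (image.ι f)
  have h0 := hf h'
  rw [← image.fac f, Category.assoc, hh'] at h0
  exact hp ((cancel_epi (factorThruImage f)).1 (by simpa using h0))

/-- The coproduct-of-`φ` endomorphism of a coproduct of copies of `E`. -/
noncomputable def phiMap (φ : End E) {ι : Type w} (c : Cofan (fun _ : ι => E))
    (hc : IsColimit c) : c.pt ⟶ c.pt :=
  hc.desc (Cofan.mk c.pt (fun i => φ ≫ c.inj i))

lemma phiMap_inj (φ : End E) {ι : Type w} (c : Cofan (fun _ : ι => E))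
    (hc : IsColimit c) (i : ι) : c.inj i ≫ phiMap φ c hc = φ ≫ c.inj i := by
  have := hc.fac (Cofan.mk c.pt (fun i => φ ≫ c.inj i)) ⟨i⟩
  simpa [phiMap, Cofan.inj] using this

/-- `phiMap` commutes with every morphism to `E`, using centrality of `φ`. -/
lemma phiMap_comp_toE (φ : End E) (hφ : ∀ g : E ⟶ E, φ ≫ g = g ≫ φ)
    {ι : Type w} (c : Cofan (fun _ : ι => E)) (hc : IsColimit c)
    (h : c.pt ⟶ E) : phiMap φ c hc ≫ h = h ≫ φ := by
  refine Cofan.IsColimit.hom_ext hc _ _ (fun i => ?_)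
  rw [← Category.assoc, phiMap_inj, Category.assoc, hφ (c.inj i ≫ h), ← Category.assoc]

/-- `phiMap` commutes with every morphism from `E`. -/
lemma phiMap_comp_fromE (hE : Injective E)
    (hcog : ∀ M : C, ¬ IsZero M → ∃ f : M ⟶ E, f ≠ 0)
    (φ : End E) (hφ : ∀ g : E ⟶ E, φ ≫ g = g ≫ φ)
    {ι : Type w} (c : Cofan (fun _ : ι => E)) (hc : IsColimit c)
    (u : E ⟶ c.pt) : φ ≫ u = u ≫ phiMap φ c hc := by
  have : φ ≫ u - u ≫ phiMap φ c hc = 0 := by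
    apply cogen_cancel hE hcog
    intro h
    simp only [Preadditive.sub_comp, Category.assoc, phiMap_comp_toE φ hφ c hc]
    rw [← Category.assoc u h φ, ← hφ, sub_self]
  exact sub_eq_zero.mp this

/-- `phiMap` commutes with every morphism between coproducts of copies of `E`. -/
lemma phiMap_comp (hE : Injective E)
    (hcog : ∀ M : C, ¬ IsZero M → ∃ f : M ⟶ E, f ≠ 0)
    (φ : End E) (hφ : ∀ g : E ⟶ E, φ ≫ g = g ≫ φ)
    {ι : Type w} (c : Cofan (fun _ : ι => E)) (hc : IsColimit c)
    {κ : Type w} (c' : Cofan (fun _ : κ => E)) (hc' : IsColimit c')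
    (v : c.pt ⟶ c'.pt) : phiMap φ c hc ≫ v = v ≫ phiMap φ c' hc' := by
  refine Cofan.IsColimit.hom_ext hc _ _ (fun i => ?_)
  rw [← Category.assoc, phiMap_inj, Category.assoc,
    phiMap_comp_fromE hE hcog φ hφ c' hc' (c.inj i ≫ v), Category.assoc]

end CenterAux

/-- Let `E` be an injective cogenerator of a Grothendieck
category `C` such that every object embeds into a direct sum of copies of `E`
(a "good cogenerator", i.e. every object `M` admits an exact sequence
`0 → M → E^(I) → E^(J)`). Then the evaluation map
`Z(C) = End(𝟭 C) → End(E)`, `z ↦ z.app E`, is injective with image exactly the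
center of the ring `End(E)`; i.e. it is a ring isomorphism onto `Z(End(E))`. -/

theorem center_eval_good_cogenerator
    [HasColimits C] [AB5 C] (hsep : ∃ G : C, IsSeparator G)
    (E : C) (hE : Injective E)
    (hcog : ∀ M : C, ¬ IsZero M → ∃ f : M ⟶ E, f ≠ 0)
    (hgood : ∀ M : C, ∃ (ι κ : Type v) (c : Cofan (fun _ : ι => E))
      (_ : IsColimit c) (c' : Cofan (fun _ : κ => E)) (_ : IsColimit c')
      (f : M ⟶ c.pt) (g : c.pt ⟶ c'.pt) (w : f ≫ g = 0),
        Mono f ∧ (ShortComplex.mk f g w).Exact) :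
    Function.Injective (fun z : End (𝟭 C) => (z.app E : End E)) ∧
    Set.range (fun z : End (𝟭 C) => (z.app E : End E)) =
      (Subring.center (End E) : Set (End E)) := by
  constructor
  · -- Injectivity
    intro z z' hzz
    have hzE : z.app E = z'.app E := hzz
    apply NatTrans.ext
    funext M
    obtain ⟨ι, κ, cc, hcc, cc', hcc', f, g, w, hmono, hexact⟩ := hgood M
    haveI := hmono
    have happ : z.app cc.pt = z'.app cc.pt := by
      refine Cofan.IsColimit.hom_ext hcc _ _ (fun i => ?_)
      have h1 := z.naturality (cc.inj i)
      have h2 := z'.naturality (cc.inj i)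
      simp only [Functor.id_map] at h1 h2
      rw [h1, h2, hzE]
    have h1 := z.naturality f
    have h2 := z'.naturality f
    simp only [Functor.id_map] at h1 h2
    rw [← cancel_mono f, ← h1, ← h2, happ]
  · -- Range is the center
    ext φ
    constructor
    · rintro ⟨z, rfl⟩
      refine (Subring.mem_center_iff (R := End E)).mpr fun g => ?_
      have := z.naturality g
      simp only [Functor.id_map] at this
      simp only [End.mul_def]
      exact this.symm
    · intro hmem
      have hmem' := (Subring.mem_center_iff (R := End E)).mp hmem
      have hφ : ∀ g : E ⟶ E, φ ≫ g = g ≫ φ := by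
        intro g
        have := hmem' g
        simpa only [End.mul_def] using this
      choose ι κ cc hcc cc' hcc' f g w hmono hexact using hgood
      -- Construct the component of the natural endomorphism at each object
      have key : ∀ M : C, ∃ zM : M ⟶ M,
          zM ≫ f M = f M ≫ phiMap φ (cc M) (hcc M) := by
        intro M
        haveI := hmono M
        have hz : (f M ≫ phiMap φ (cc M) (hcc M)) ≫ g M = 0 := by
          rw [Category.assoc,
            phiMap_comp hE hcog φ hφ (cc M) (hcc M) (cc' M) (hcc' M) (g M),
            ← Category.assoc, w M, zero_comp]
        obtain ⟨l, hl⟩ := KernelFork.IsLimit.lift' (hexact M).fIsKernel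
          (f M ≫ phiMap φ (cc M) (hcc M)) hz
        exact ⟨l, by simpa using hl⟩
      choose zapp hzapp using key
      -- The master commuting lemma
      have master : ∀ (M : C) (τ : Type v) (d : Cofan (fun _ : τ => E))
          (hd : IsColimit d) (u : M ⟶ d.pt),
          zapp M ≫ u = u ≫ phiMap φ d hd := by
        intro M τ d hd u
        have hsub : zapp M ≫ u - u ≫ phiMap φ d hd = 0 := by
          apply cogen_cancel hE hcog
          intro h
          haveI := hmono M
          obtain ⟨h', hh'⟩ := hE.factors (u ≫ h) (f M)
          have e1 : (zapp M ≫ u) ≫ h = (u ≫ h) ≫ φ := by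
            rw [Category.assoc, ← hh', ← Category.assoc, hzapp M, Category.assoc,
              phiMap_comp_toE φ hφ (cc M) (hcc M) h', ← Category.assoc, hh']
          have e2 : (u ≫ phiMap φ d hd) ≫ h = (u ≫ h) ≫ φ := by
            rw [Category.assoc, phiMap_comp_toE φ hφ d hd h, ← Category.assoc]
          rw [Preadditive.sub_comp, e1, e2, sub_self]
        exact sub_eq_zero.mp hsub
      -- Naturality
      have hnat : ∀ {M N : C} (α : M ⟶ N), zapp M ≫ α = α ≫ zapp N := by
        intro M N α
        haveI := hmono N
        rw [← cancel_mono (f N), Category.assoc, Category.assoc, hzapp N,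
          master M _ (cc N) (hcc N) (α ≫ f N), Category.assoc]
      refine ⟨{ app := fun M => zapp M,
                naturality := fun M N α => by
                  simp only [Functor.id_map]
                  exact (hnat α).symm }, ?_⟩
      show zapp E = φ
      haveI := hmono E
      have hfe : zapp E ≫ f E = φ ≫ f E := by
        rw [hzapp E, phiMap_comp_fromE hE hcog φ hφ (cc E) (hcc E) (f E)]
      exact (cancel_mono (f E)).1 hfe

end CentralSheaf
end

section
/- Let C be a locally noetherian Grothendieck category, L a stable localizing subcategory, and q : C → C/L the quotient functor. Then q restricts to an equivalence between the full subcategory of injective objects of C having no nonzero subobject in L and the full subcategory of injective objects of C/L. -/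
open CategoryTheory Limits

universe w v u u₂ u₃ u₄ u₅

namespace CentralSheaf

variable {C : Type u} [Category.{v} C] [Abelian C]

section GabrielAux

open ZeroObject

variable {C : Type u} [Category.{v} C] [Abelian C]
variable {D : Type u₂} [Category.{v} D] [Abelian D]
variable {P : C → Prop} (Q : QuotientData P D)

/-- The section functor preserves zero morphisms. -/
lemma S_preservesZeroMorphisms : Q.S.PreservesZeroMorphisms := by
  haveI : PreservesLimitsOfSize.{0, 0} Q.S := Q.adj.rightAdjoint_preservesLimits
  have ht : IsTerminal (Q.S.obj (0 : D)) :=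
    ((isZero_zero D).isTerminal).isTerminalObj Q.S _
  have hz : IsZero (Q.S.obj (0 : D)) :=
    (IsZero.iff_id_eq_zero _).mpr (ht.hom_ext _ _)
  exact Functor.preservesZeroMorphisms_of_map_zero_object hz.isoZero

/-- Any subobject of an object in the image of the section functor which lies in
`P` is zero. -/
lemma isZero_of_mono_to_S {Z : C} {Y : D} (a : Z ⟶ Q.S.obj Y) [Mono a] (hZ : P Z) :
    IsZero Z := by
  haveI := S_preservesZeroMorphisms Q
  have h0 : IsZero (Q.T.obj Z) := (Q.ker Z).mp hZ
  have ha : a = (Q.adj.homEquiv Z Y) ((Q.adj.homEquiv Z Y).symm a) :=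
    (Equiv.apply_symm_apply _ _).symm
  rw [h0.eq_zero_of_src ((Q.adj.homEquiv Z Y).symm a), Adjunction.homEquiv_unit,
    Functor.map_zero, comp_zero] at ha
  exact IsZero.of_mono_eq_zero a ha

/-- The unit of the adjunction is an isomorphism at an injective object with no
nonzero subobject in `P`. -/
lemma isIso_unit_app (X : C) (hinj : Injective X)
    (hX : ∀ (Z : C) (a : Z ⟶ X), Mono a → P Z → IsZero Z) :
    IsIso (Q.adj.unit.app X) := by
  haveI := Q.additive
  haveI := Q.preservesFiniteLimits
  haveI := Q.fullS
  haveI := Q.faithfulS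
  haveI := hinj
  haveI : PreservesColimitsOfSize.{0, 0} Q.T := Q.adj.leftAdjoint_preservesColimits
  set u : X ⟶ Q.S.obj (Q.T.obj X) := Q.adj.unit.app X with hu
  have htr : Q.T.map u ≫ Q.adj.counit.app (Q.T.obj X) = 𝟙 _ :=
    Q.adj.left_triangle_components X
  haveI : IsIso (Q.T.map u) := IsIso.of_isIso_fac_right htr
  -- u is a monomorphism
  have hker : IsZero (Q.T.obj (kernel u)) :=
    (IsZero.of_iso (isZero_zero D) (kernel.ofMono (Q.T.map u))).of_iso
      (PreservesKernel.iso Q.T u)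
  have hkz : IsZero (kernel u) := hX _ (kernel.ι u) inferInstance ((Q.ker _).mpr hker)
  haveI : Mono u := Preadditive.mono_of_isZero_kernel _ hkz
  -- a retraction coming from injectivity
  set r : Q.S.obj (Q.T.obj X) ⟶ X := Injective.factorThru (𝟙 X) u with hr
  have hfac : u ≫ r = 𝟙 X := Injective.comp_factorThru (𝟙 X) u
  -- the cokernel of `u` embeds into `S (T X)`
  have hzero : u ≫ (𝟙 (Q.S.obj (Q.T.obj X)) - r ≫ u) = 0 := by
    rw [Preadditive.comp_sub, Category.comp_id, ← Category.assoc, hfac,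
      Category.id_comp, sub_self]
  set t : cokernel u ⟶ Q.S.obj (Q.T.obj X) :=
    cokernel.desc u (𝟙 (Q.S.obj (Q.T.obj X)) - r ≫ u) hzero with ht
  have hts : t ≫ cokernel.π u = 𝟙 (cokernel u) := by
    rw [← cancel_epi (cokernel.π u), ← Category.assoc]
    rw [ht, cokernel.π_desc, Category.comp_id, Preadditive.sub_comp, Category.id_comp,
      Category.assoc, cokernel.condition, comp_zero, sub_zero]
  haveI : IsSplitMono t := IsSplitMono.mk' ⟨cokernel.π u, hts⟩
  have hcoker : IsZero (Q.T.obj (cokernel u)) :=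
    (IsZero.of_iso (isZero_zero D) (cokernel.ofEpi (Q.T.map u))).of_iso
      (PreservesCokernel.iso Q.T u)
  have hcz : IsZero (cokernel u) := isZero_of_mono_to_S Q t ((Q.ker _).mpr hcoker)
  haveI : Epi u := Preadditive.epi_of_isZero_cokernel _ hcz
  exact isIso_of_mono_of_epi u

/-- The quotient functor maps such injectives to injectives. -/
lemma injective_T_obj (X : C) (hinj : Injective X) (hu : IsIso (Q.adj.unit.app X)) :
    Injective (Q.T.obj X) := by
  haveI := Q.fullS
  haveI := Q.faithfulS
  haveI := Q.preservesFiniteLimits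
  haveI : Q.S.PreservesMonomorphisms :=
    Functor.preservesMonomorphisms_of_adjunction Q.adj
  haveI := hu
  constructor
  intro A B g f hf
  have hSTX : Injective (Q.S.obj (Q.T.obj X)) :=
    Injective.of_iso (asIso (Q.adj.unit.app X)) hinj
  haveI := hSTX
  obtain ⟨g', hg'⟩ := hSTX.factors (Q.S.map g) (Q.S.map f)
  refine ⟨inv (Q.adj.counit.app B) ≫ Q.T.map g' ≫ Q.adj.counit.app (Q.T.obj X), ?_⟩
  have key : Q.T.map (Q.S.map f) ≫ Q.T.map g' ≫ Q.adj.counit.app (Q.T.obj X)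
      = Q.adj.counit.app A ≫ g := by
    rw [← Functor.map_comp_assoc, hg']
    exact Q.adj.counit.naturality g
  have hf2 : f = inv (Q.adj.counit.app A) ≫ Q.T.map (Q.S.map f) ≫ Q.adj.counit.app B := by
    rw [IsIso.eq_inv_comp]
    exact (Q.adj.counit.naturality f).symm
  rw [hf2]
  simp only [Category.assoc, IsIso.hom_inv_id_assoc]
  rw [key, IsIso.inv_hom_id_assoc]

end GabrielAux

/-- Let `C` be a locally noetherian Grothendieck category, `L`
a stable localizing subcategory and `q : C → C/L` the quotient functor. Then
`q` restricts to an equivalence between the full subcategory of injective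
objects of `C` with no nonzero subobject in `L` and the full subcategory of
injective objects of `C/L`. -/
theorem quotient_restricts_to_equivalence_on_injectives
    [HasColimits C] [AB5 C] (hln : IsLocallyNoetherian C)
    {D : Type u₂} [Category.{v} D] [Abelian D]
    (P : C → Prop) (hP : IsStableLocalizing P) (Q : QuotientData P D) :
    ∃ F : ObjectProperty.FullSubcategory (fun X : C => Injective X ∧
        ∀ s : Subobject X, P ((s : C)) → IsZero ((s : C))) ⥤
      ObjectProperty.FullSubcategory (fun Y : D => Injective Y),
      Nonempty (ObjectProperty.ι _ ⋙ Q.T ≅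
        F ⋙ ObjectProperty.ι _) ∧ F.IsEquivalence := by

  classical
  haveI := Q.additive
  haveI := Q.preservesFiniteLimits
  haveI := Q.fullS
  haveI := Q.faithfulS
  have hmono : ∀ (X : C), (∀ s : Subobject X, P ((s : C)) → IsZero ((s : C))) →
      ∀ (Z : C) (a : Z ⟶ X), Mono a → P Z → IsZero Z := by
    intro X hX Z a ha hZ
    haveI := ha
    have h1 : P ((Subobject.mk a : C)) :=
      hP.toIsLocalizing.toIsSerre.iso (Subobject.underlyingIso a).symm hZ
    exact (hX _ h1).of_iso (Subobject.underlyingIso a).symm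
  have unitIso : ∀ A : ObjectProperty.FullSubcategory (fun X : C => Injective X ∧
      ∀ s : Subobject X, P ((s : C)) → IsZero ((s : C))), IsIso (Q.adj.unit.app A.obj) :=
    fun A => isIso_unit_app Q A.obj A.property.1 (hmono _ A.property.2)
  have hTinj : ∀ A : ObjectProperty.FullSubcategory (fun X : C => Injective X ∧
      ∀ s : Subobject X, P ((s : C)) → IsZero ((s : C))),
      Injective ((ObjectProperty.ι _ ⋙ Q.T).obj A) := fun A =>
    injective_T_obj Q A.obj A.property.1 (unitIso A)
  refine ⟨ObjectProperty.lift _ (ObjectProperty.ι _ ⋙ Q.T) hTinj,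
    ⟨(ObjectProperty.liftCompιIso _ _ _).symm⟩, ?_⟩
  have hf : ∀ {A B : C} (f : A ⟶ B),
      Q.adj.homEquiv A (Q.T.obj B) (Q.T.map f) = f ≫ Q.adj.unit.app B := by
    intro A B f
    rw [Adjunction.homEquiv_unit]
    simpa using (Q.adj.unit.naturality f).symm

  constructor
  · -- faithful
    constructor
    intro A B f g h
    haveI := unitIso B
    have h' : Q.T.map f.hom = Q.T.map g.hom := by
      have := congrArg InducedCategory.Hom.hom h; exact this
    have := congrArg (Q.adj.homEquiv A.obj (Q.T.obj B.obj)) h'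
    rw [hf f.hom, hf g.hom] at this
    exact ObjectProperty.hom_ext _ ((cancel_mono (Q.adj.unit.app B.obj)).mp this)
  · -- full
    constructor
    intro A B g
    haveI := unitIso A
    haveI := unitIso B
    refine ⟨ObjectProperty.homMk (Q.adj.unit.app A.obj ≫ Q.S.map g.hom ≫ inv (Q.adj.unit.app B.obj) :
      A.obj ⟶ B.obj), ?_⟩
    apply ObjectProperty.hom_ext
    show Q.T.map (Q.adj.unit.app A.obj ≫ Q.S.map g.hom ≫ inv (Q.adj.unit.app B.obj)) = g.hom
    apply (Q.adj.homEquiv A.obj (Q.T.obj B.obj)).injective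
    rw [hf, Adjunction.homEquiv_unit]
    simp only [Category.assoc, IsIso.inv_hom_id, Category.comp_id]
  · -- essentially surjective
    constructor
    intro B
    haveI := B.property
    haveI : Q.T.PreservesMonomorphisms := by
      haveI : PreservesLimitsOfShape WalkingCospan Q.T := by infer_instance
      infer_instance
    have h1 : Injective (Q.S.obj B.obj) := Injective.injective_of_adjoint Q.adj B.obj
    have h2 : ∀ s : Subobject (Q.S.obj B.obj), P ((s : C)) → IsZero ((s : C)) :=
      fun s hs => isZero_of_mono_to_S Q s.arrow hs
    haveI : IsIso Q.adj.counit := inferInstance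
    haveI : IsIso (Q.adj.counit.app B.obj) := inferInstance
    refine ⟨⟨Q.S.obj B.obj, h1, h2⟩, ⟨?_⟩⟩
    exact
      { hom := ObjectProperty.homMk (Q.adj.counit.app B.obj :
          Q.T.obj (Q.S.obj B.obj) ⟶ B.obj)
        inv := ObjectProperty.homMk (inv (Q.adj.counit.app B.obj) : B.obj ⟶ Q.T.obj (Q.S.obj B.obj))
        hom_inv_id := ObjectProperty.hom_ext _ (IsIso.hom_inv_id (Q.adj.counit.app B.obj))
        inv_hom_id := ObjectProperty.hom_ext _ (IsIso.inv_hom_id (Q.adj.counit.app B.obj)) }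


end CentralSheaf
end
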